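/- arXiv:1603.01944 — 4 statements merged into one kernel-verified Lean document; each statement's English description precedes it below -/
import Mathlib

section
/- Let H = -Δ + V be a discrete Schrödinger operator on ℓ²(ℤ), where V is a bounded multiplication operator. For a > 0, let T_a be the weight operator (T_a u)(j) = e^{a|j|}u(j). Then T_a H T_a^{-1} = H + B_a where B_a is a bounded operator on ℓ²(ℤ) with ‖B_a‖ ≤ C·a for a constant C independent of a (for small a > 0). -/
/-- Discrete Laplacian on `ℤ`. -/
noncomputable def discLap (u : ℤ → ℂ) : ℤ → ℂ := fun j => u (j + 1) - 2 * u j + u (j - 1)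

/-- Exponential weight operator `(T_a u)(j) = e^{a|j|} u(j)`. -/
noncomputable def Tw (a : ℝ) (u : ℤ → ℂ) : ℤ → ℂ := fun j => (Real.exp (a * |(j : ℝ)|) : ℝ) * u j

/-- Discrete Schrödinger operator `H = -Δ + V`. -/
noncomputable def schrodOp (V : ℤ → ℝ) (u : ℤ → ℂ) : ℤ → ℂ :=
  fun j => -(discLap u j) + (V j : ℂ) * u j

/-- `T_a H T_a^{-1} = H + B_a` with `‖B_a‖ ≤ C·a` on `ℓ²(ℤ)`, `B_a := T_a H T_a^{-1} - H`,
for a constant `C` independent of (small) `a`. -/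
theorem stmt2 (V : ℤ → ℝ) (hV : ∃ M : ℝ, ∀ j, |V j| ≤ M) :
    ∃ C > 0, ∀ a : ℝ, 0 < a → a ≤ 1 → ∀ u : ℤ → ℂ,
      Summable (fun j : ℤ => ‖u j‖ ^ 2) →
      (∑' j : ℤ, ‖Tw a (schrodOp V (Tw (-a) u)) j - schrodOp V u j‖ ^ 2)
        ≤ (C * a) ^ 2 * ∑' j : ℤ, ‖u j‖ ^ 2 := by
  refine ⟨4, by norm_num, ?_⟩
  intro a ha ha1 u hu
  have key : ∀ j : ℤ, ‖Tw a (schrodOp V (Tw (-a) u)) j - schrodOp V u j‖ ^ 2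
      ≤ 8 * a ^ 2 * (‖u (j+1)‖ ^ 2 + ‖u (j-1)‖ ^ 2) := by
    intro j
    have hid : Tw a (schrodOp V (Tw (-a) u)) j - schrodOp V u j
        = -(((Real.exp (a * |((j:ℤ):ℝ)| - a * |(((j+1:ℤ)):ℝ)|) - 1 : ℝ) : ℂ) * u (j+1)
          + ((Real.exp (a * |((j:ℤ):ℝ)| - a * |(((j-1:ℤ)):ℝ)|) - 1 : ℝ) : ℂ) * u (j-1)) := by
      simp only [Tw, schrodOp, discLap, Real.exp_sub, neg_mul, Real.exp_neg]
      have e0 : ∀ x : ℝ, ((Real.exp x : ℝ) : ℂ) ≠ 0 := fun x => by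
        exact_mod_cast (Real.exp_pos x).ne'
      push_cast
      field_simp
      ring
    have habs : ∀ k : ℤ, |(k : ℝ) - (j : ℝ)| ≤ 1 →
        abs (a * |((j:ℤ):ℝ)| - a * |((k:ℤ):ℝ)|) ≤ a := by
      intro k hk
      have : abs (a * |((j:ℤ):ℝ)| - a * |((k:ℤ):ℝ)|) = a * abs (|(j:ℝ)| - |(k:ℝ)|) := by
        rw [← mul_sub, abs_mul, abs_of_pos ha]
      rw [this]
      calc a * abs (|(j:ℝ)| - |(k:ℝ)|) ≤ a * |(j:ℝ) - (k:ℝ)| := by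
            exact mul_le_mul_of_nonneg_left (abs_abs_sub_abs_le_abs_sub _ _) ha.le
        _ ≤ a * 1 := by
            refine mul_le_mul_of_nonneg_left ?_ ha.le
            rw [abs_sub_comm]; exact hk
        _ = a := mul_one a
    have hb : ∀ k : ℤ, |(k : ℝ) - (j : ℝ)| ≤ 1 →
        abs (Real.exp (a * |((j:ℤ):ℝ)| - a * |((k:ℤ):ℝ)|) - 1) ≤ 2 * a := by
      intro k hk
      have h1 := habs k hk
      have := Real.abs_exp_sub_one_le (x := a * |((j:ℤ):ℝ)| - a * |((k:ℤ):ℝ)|) (h1.trans ha1)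
      linarith
    have hnorm : ‖Tw a (schrodOp V (Tw (-a) u)) j - schrodOp V u j‖
        ≤ 2 * a * (‖u (j+1)‖ + ‖u (j-1)‖) := by
      rw [hid, norm_neg]
      have h1 : |(((j+1:ℤ)) : ℝ) - (j : ℝ)| ≤ 1 := by push_cast; simp
      have h2 : |(((j-1:ℤ)) : ℝ) - (j : ℝ)| ≤ 1 := by push_cast; simp
      calc ‖((Real.exp (a * |((j:ℤ):ℝ)| - a * |(((j+1:ℤ)):ℝ)|) - 1 : ℝ) : ℂ) * u (j+1)
            + ((Real.exp (a * |((j:ℤ):ℝ)| - a * |(((j-1:ℤ)):ℝ)|) - 1 : ℝ) : ℂ) * u (j-1)‖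
          ≤ ‖((Real.exp (a * |((j:ℤ):ℝ)| - a * |(((j+1:ℤ)):ℝ)|) - 1 : ℝ) : ℂ)‖ * ‖u (j+1)‖
            + ‖((Real.exp (a * |((j:ℤ):ℝ)| - a * |(((j-1:ℤ)):ℝ)|) - 1 : ℝ) : ℂ)‖ * ‖u (j-1)‖ := by
            refine (norm_add_le _ _).trans ?_
            simp [norm_mul]
        _ ≤ (2*a) * ‖u (j+1)‖ + (2*a) * ‖u (j-1)‖ := by
            gcongr
            · rw [Complex.norm_real, Real.norm_eq_abs]; exact hb (j+1) h1
            · rw [Complex.norm_real, Real.norm_eq_abs]; exact hb (j-1) h2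
        _ = 2 * a * (‖u (j+1)‖ + ‖u (j-1)‖) := by ring
    have hn0 : (0:ℝ) ≤ ‖Tw a (schrodOp V (Tw (-a) u)) j - schrodOp V u j‖ := norm_nonneg _
    have hsq := pow_le_pow_left₀ hn0 hnorm 2
    nlinarith [sq_nonneg (‖u (j+1)‖ - ‖u (j-1)‖), norm_nonneg (u (j+1)), norm_nonneg (u (j-1))]
  have hs1 : Summable (fun j : ℤ => ‖u (j+1)‖ ^ 2) :=
    ((Equiv.addRight (1:ℤ)).summable_iff (f := fun j => ‖u j‖ ^ 2)).2 hu
  have hs2 : Summable (fun j : ℤ => ‖u (j-1)‖ ^ 2) :=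
    ((Equiv.subRight (1:ℤ)).summable_iff (f := fun j => ‖u j‖ ^ 2)).2 hu
  have hbsum : Summable (fun j : ℤ => 8 * a ^ 2 * (‖u (j+1)‖ ^ 2 + ‖u (j-1)‖ ^ 2)) :=
    (hs1.add hs2).mul_left _
  have hfsum : Summable (fun j : ℤ => ‖Tw a (schrodOp V (Tw (-a) u)) j - schrodOp V u j‖ ^ 2) :=
    Summable.of_nonneg_of_le (fun j => by positivity) key hbsum
  calc (∑' j : ℤ, ‖Tw a (schrodOp V (Tw (-a) u)) j - schrodOp V u j‖ ^ 2)
      ≤ ∑' j : ℤ, 8 * a ^ 2 * (‖u (j+1)‖ ^ 2 + ‖u (j-1)‖ ^ 2) := Summable.tsum_le_tsum key hfsum hbsum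
    _ = 8 * a ^ 2 * ((∑' j : ℤ, ‖u (j+1)‖ ^ 2) + ∑' j : ℤ, ‖u (j-1)‖ ^ 2) := by
        rw [tsum_mul_left, Summable.tsum_add hs1 hs2]
    _ = (4 * a) ^ 2 * ∑' j : ℤ, ‖u j‖ ^ 2 := by
        have e1 : (∑' j : ℤ, ‖u (j+1)‖ ^ 2) = ∑' j : ℤ, ‖u j‖ ^ 2 :=
          Equiv.tsum_eq (Equiv.addRight (1:ℤ)) (fun j => ‖u j‖ ^ 2)
        have e2 : (∑' j : ℤ, ‖u (j-1)‖ ^ 2) = ∑' j : ℤ, ‖u j‖ ^ 2 :=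
          Equiv.tsum_eq (Equiv.subRight (1:ℤ)) (fun j => ‖u j‖ ^ 2)
        rw [e1, e2]; ring
end

section
/- Let H be a self-adjoint operator on ℓ²(ℤ) with an isolated simple eigenvalue e and normalized eigenfunction φ, and let B_a be a family of bounded operators with ‖B_a‖ ≤ Ca. For sufficiently small a > 0, the fixed point equation u = (H - e)^{-1} P_c( (⟨B_a(φ+u), φ⟩ - B_a)(φ+u) ) has a solution u_a in the ball of radius 2C₀a in ℓ²(ℤ), where P_c is the orthogonal projection onto the orthogonal complement of φ and C₀ depends only on ‖(H-e)^{-1}P_c‖ and C. Consequently, setting e_a = e + ⟨B_a(φ+u_a), φ⟩ and φ_a = φ + u_a, one has (H + B_a)φ_a = e_a φ_a and e_a → e as a → 0. -/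
set_option maxHeartbeats 1000000


open RealInnerProductSpace

/-- Construction of an eigenpair of `H + B_a` near `(e, φ)` by a contraction argument:
the fixed point equation `u = (H-e)⁻¹P_c((⟨B_a(φ+u),φ⟩ - B_a)(φ+u))` has a solution `u_a`
with `‖u_a‖ ≤ 2C₀a`, and `(H+B_a)(φ+u_a) = e_a(φ+u_a)` with `e_a = e + ⟨B_a(φ+u_a),φ⟩ → e`.
Here `R` is the bounded inverse `(H-e)⁻¹P_c` (`P_c u = u - ⟨u,φ⟩φ`), which exists since `e`
is an isolated simple eigenvalue. -/
theorem stmt3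
    (H : lp (fun _ : ℤ => ℝ) 2 →L[ℝ] lp (fun _ : ℤ => ℝ) 2) (hsa : IsSelfAdjoint H)
    (e : ℝ) (φ : lp (fun _ : ℤ => ℝ) 2) (hφ : ‖φ‖ = 1) (heig : H φ = e • φ)
    (hsimple : ∀ u, H u = e • u → ∃ c : ℝ, u = c • φ)
    (R : lp (fun _ : ℤ => ℝ) 2 →L[ℝ] lp (fun _ : ℤ => ℝ) 2)
    (hR : ∀ u, H (R u) - e • R u = u - ⟪u, φ⟫ • φ)
    (hRorth : ∀ u, ⟪R u, φ⟫ = 0)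
    (C : ℝ) (hC : 0 < C)
    (B : ℝ → (lp (fun _ : ℤ => ℝ) 2 →L[ℝ] lp (fun _ : ℤ => ℝ) 2))
    (hB : ∀ a : ℝ, 0 < a → ‖B a‖ ≤ C * a) :
    ∃ C₀ > 0, ∃ a₀ > 0, ∃ u : ℝ → lp (fun _ : ℤ => ℝ) 2,
      (∀ a : ℝ, 0 < a → a < a₀ →
        ‖u a‖ ≤ 2 * C₀ * a ∧
        u a = R (⟪B a (φ + u a), φ⟫ • (φ + u a) - B a (φ + u a)) ∧
        (H + B a) (φ + u a) = (e + ⟪B a (φ + u a), φ⟫) • (φ + u a)) ∧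
      Filter.Tendsto (fun a => e + ⟪B a (φ + u a), φ⟫)
        (nhdsWithin 0 (Set.Ioi 0)) (nhds e) := by
  classical
  set M : ℝ := ‖R‖ with hM
  have hM0 : 0 ≤ M := norm_nonneg _
  set C₀ : ℝ := 6 * (M + 1) * C with hC₀def
  have hC₀ : 0 < C₀ := by positivity
  set a₀ : ℝ := min (1 / (2 * C₀)) (1 / (10 * (M + 1) * C)) with ha₀def
  have ha₀ : 0 < a₀ := by
    apply lt_min
    · have : 0 < 2 * C₀ := by linarith
      positivity
    · positivity
  set Ψ : ℝ → lp (fun _ : ℤ => ℝ) 2 → lp (fun _ : ℤ => ℝ) 2 :=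
    fun a u => R (⟪B a (φ + u), φ⟫ • (φ + u) - B a (φ + u)) with hΨdef
  -- basic norm bounds
  have hpnorm : ∀ w : lp (fun _ : ℤ => ℝ) 2, ‖w‖ ≤ 1 → ‖φ + w‖ ≤ 2 := by
    intro w hw
    calc ‖φ + w‖ ≤ ‖φ‖ + ‖w‖ := norm_add_le _ _
      _ ≤ 2 := by rw [hφ]; linarith
  have hBap : ∀ a : ℝ, 0 < a → ∀ w : lp (fun _ : ℤ => ℝ) 2, ‖w‖ ≤ 1 →
      ‖B a (φ + w)‖ ≤ C * a * 2 := by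
    intro a ha w hw
    calc ‖B a (φ + w)‖ ≤ ‖B a‖ * ‖φ + w‖ := (B a).le_opNorm _
      _ ≤ (C * a) * 2 :=
        mul_le_mul (hB a ha) (hpnorm w hw) (norm_nonneg _)
          (le_trans (norm_nonneg _) (hB a ha))
  have hinner : ∀ a : ℝ, 0 < a → ∀ w : lp (fun _ : ℤ => ℝ) 2, ‖w‖ ≤ 1 →
      |⟪B a (φ + w), φ⟫| ≤ C * a * 2 := by
    intro a ha w hw
    calc |⟪B a (φ + w), φ⟫| ≤ ‖B a (φ + w)‖ * ‖φ‖ := abs_real_inner_le_norm _ _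
      _ = ‖B a (φ + w)‖ := by rw [hφ, mul_one]
      _ ≤ C * a * 2 := hBap a ha w hw
  have key_bound : ∀ a : ℝ, 0 < a → ∀ w : lp (fun _ : ℤ => ℝ) 2, ‖w‖ ≤ 1 →
      ‖Ψ a w‖ ≤ C₀ * a := by
    intro a ha w hw
    have h1 : ‖⟪B a (φ + w), φ⟫ • (φ + w) - B a (φ + w)‖ ≤ 6 * (C * a) := by
      calc ‖⟪B a (φ + w), φ⟫ • (φ + w) - B a (φ + w)‖
          ≤ ‖⟪B a (φ + w), φ⟫ • (φ + w)‖ + ‖B a (φ + w)‖ := norm_sub_le _ _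
        _ = |⟪B a (φ + w), φ⟫| * ‖φ + w‖ + ‖B a (φ + w)‖ := by
            rw [norm_smul, Real.norm_eq_abs]
        _ ≤ (C * a * 2) * 2 + C * a * 2 :=
            add_le_add (mul_le_mul (hinner a ha w hw) (hpnorm w hw) (norm_nonneg _)
              (by positivity)) (hBap a ha w hw)
        _ = 6 * (C * a) := by ring
    calc ‖Ψ a w‖ ≤ M * ‖⟪B a (φ + w), φ⟫ • (φ + w) - B a (φ + w)‖ := R.le_opNorm _
      _ ≤ M * (6 * (C * a)) := by
          apply mul_le_mul_of_nonneg_left h1 hM0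
      _ ≤ C₀ * a := by rw [hC₀def]; nlinarith [mul_nonneg hC.le ha.le]
  have key_lip : ∀ a : ℝ, 0 < a → ∀ u v : lp (fun _ : ℤ => ℝ) 2, ‖u‖ ≤ 1 → ‖v‖ ≤ 1 →
      ‖Ψ a u - Ψ a v‖ ≤ (5 * (M + 1) * C * a) * ‖u - v‖ := by
    intro a ha u v hu hv
    have hpq : (φ + u) - (φ + v) = u - v := by abel
    have hBd : B a (φ + u) - B a (φ + v) = B a (u - v) := by rw [← map_sub, hpq]
    have hX : (⟪B a (φ + u), φ⟫ • (φ + u) - B a (φ + u))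
        - (⟪B a (φ + v), φ⟫ • (φ + v) - B a (φ + v))
        = ⟪B a (u - v), φ⟫ • (φ + u) + ⟪B a (φ + v), φ⟫ • (u - v) - B a (u - v) := by
      rw [← hBd, ← hpq, inner_sub_left]
      module
    have hd1 : |⟪B a (u - v), φ⟫| ≤ C * a * ‖u - v‖ := by
      calc |⟪B a (u - v), φ⟫| ≤ ‖B a (u - v)‖ * ‖φ‖ := abs_real_inner_le_norm _ _
        _ = ‖B a (u - v)‖ := by rw [hφ, mul_one]
        _ ≤ ‖B a‖ * ‖u - v‖ := (B a).le_opNorm _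
        _ ≤ C * a * ‖u - v‖ := mul_le_mul_of_nonneg_right (hB a ha) (norm_nonneg _)
    have hd2 : ‖B a (u - v)‖ ≤ C * a * ‖u - v‖ := by
      calc ‖B a (u - v)‖ ≤ ‖B a‖ * ‖u - v‖ := (B a).le_opNorm _
        _ ≤ C * a * ‖u - v‖ := mul_le_mul_of_nonneg_right (hB a ha) (norm_nonneg _)
    have hXnorm : ‖⟪B a (u - v), φ⟫ • (φ + u) + ⟪B a (φ + v), φ⟫ • (u - v) - B a (u - v)‖
        ≤ 5 * (C * a) * ‖u - v‖ := by
      calc ‖⟪B a (u - v), φ⟫ • (φ + u) + ⟪B a (φ + v), φ⟫ • (u - v) - B a (u - v)‖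
          ≤ ‖⟪B a (u - v), φ⟫ • (φ + u) + ⟪B a (φ + v), φ⟫ • (u - v)‖ + ‖B a (u - v)‖ :=
            norm_sub_le _ _
        _ ≤ ‖⟪B a (u - v), φ⟫ • (φ + u)‖ + ‖⟪B a (φ + v), φ⟫ • (u - v)‖ + ‖B a (u - v)‖ := by
            gcongr
            exact norm_add_le _ _
        _ = |⟪B a (u - v), φ⟫| * ‖φ + u‖ + |⟪B a (φ + v), φ⟫| * ‖u - v‖ + ‖B a (u - v)‖ := by
            rw [norm_smul, norm_smul, Real.norm_eq_abs, Real.norm_eq_abs]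
        _ ≤ (C * a * ‖u - v‖) * 2 + (C * a * 2) * ‖u - v‖ + C * a * ‖u - v‖ := by
            refine add_le_add (add_le_add ?_ ?_) hd2
            · exact mul_le_mul hd1 (hpnorm u hu) (norm_nonneg _) (by positivity)
            · exact mul_le_mul_of_nonneg_right (hinner a ha v hv) (norm_nonneg _)
        _ = 5 * (C * a) * ‖u - v‖ := by ring
    calc ‖Ψ a u - Ψ a v‖
        = ‖R ((⟪B a (φ + u), φ⟫ • (φ + u) - B a (φ + u))
            - (⟪B a (φ + v), φ⟫ • (φ + v) - B a (φ + v)))‖ := by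
          rw [map_sub]
      _ = ‖R (⟪B a (u - v), φ⟫ • (φ + u) + ⟪B a (φ + v), φ⟫ • (u - v) - B a (u - v))‖ := by
          rw [hX]
      _ ≤ M * ‖⟪B a (u - v), φ⟫ • (φ + u) + ⟪B a (φ + v), φ⟫ • (u - v) - B a (u - v)‖ :=
          R.le_opNorm _
      _ ≤ M * (5 * (C * a) * ‖u - v‖) := mul_le_mul_of_nonneg_left hXnorm hM0
      _ ≤ (5 * (M + 1) * C * a) * ‖u - v‖ := by
          have hd0 : (0:ℝ) ≤ ‖u - v‖ := norm_nonneg _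
          have hsc : M * (5 * (C * a)) ≤ 5 * (M + 1) * C * a := by
            nlinarith [mul_nonneg hC.le ha.le]
          calc M * (5 * (C * a) * ‖u - v‖) = (M * (5 * (C * a))) * ‖u - v‖ := by ring
            _ ≤ (5 * (M + 1) * C * a) * ‖u - v‖ := mul_le_mul_of_nonneg_right hsc hd0
  -- fixed point existence
  have hexists : ∀ a : ℝ, 0 < a → a < a₀ →
      ∃ w : lp (fun _ : ℤ => ℝ) 2, ‖w‖ ≤ 2 * C₀ * a ∧ w = Ψ a w := by
    intro a ha ha'
    set r : ℝ := 2 * C₀ * a with hrdef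
    have hr0 : 0 < r := by positivity
    have hamin1 : a ≤ 1 / (2 * C₀) := le_of_lt (lt_of_lt_of_le ha' (min_le_left _ _))
    have hamin2 : a ≤ 1 / (10 * (M + 1) * C) := le_of_lt (lt_of_lt_of_le ha' (min_le_right _ _))
    have hr1 : r ≤ 1 := by
      rw [le_div_iff₀ (by linarith : (0:ℝ) < 2 * C₀)] at hamin1
      rw [hrdef]; nlinarith
    have hlip5 : 5 * (M + 1) * C * a ≤ 1 / 2 := by
      rw [le_div_iff₀ (by positivity : (0:ℝ) < 10 * (M + 1) * C)] at hamin2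
      nlinarith
    have hmaps : ∀ w : lp (fun _ : ℤ => ℝ) 2, ‖w‖ ≤ r → ‖Ψ a w‖ ≤ r := by
      intro w hw
      have h := key_bound a ha w (hw.trans hr1)
      have hCa : (0:ℝ) ≤ C₀ * a := mul_nonneg hC₀.le ha.le
      rw [hrdef]; linarith
    have hlip : ∀ u v : lp (fun _ : ℤ => ℝ) 2, ‖u‖ ≤ r → ‖v‖ ≤ r →
        ‖Ψ a u - Ψ a v‖ ≤ (1 / 2) * ‖u - v‖ := by
      intro u v hu hv
      refine (key_lip a ha u v (hu.trans hr1) (hv.trans hr1)).trans ?_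
      exact mul_le_mul_of_nonneg_right hlip5 (norm_nonneg _)
    set S := Metric.closedBall (0 : lp (fun _ : ℤ => ℝ) 2) r with hSdef
    haveI : CompleteSpace S := Metric.isClosed_closedBall.completeSpace_coe
    haveI hne : Nonempty S := ⟨⟨0, Metric.mem_closedBall_self hr0.le⟩⟩
    have memS : ∀ x : lp (fun _ : ℤ => ℝ) 2, x ∈ S ↔ ‖x‖ ≤ r := by
      intro x
      rw [hSdef, Metric.mem_closedBall, dist_zero_right]
    set f : S → S := fun x => ⟨Ψ a x.1, (memS _).mpr (hmaps x.1 ((memS _).mp x.2))⟩ with hfdef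
    have hcf : ContractingWith (1 / 2 : NNReal) f := by
      constructor
      · rw [← NNReal.coe_lt_coe]; norm_num
      · apply LipschitzWith.of_dist_le_mul
        intro x y
        rw [Subtype.dist_eq, Subtype.dist_eq, dist_eq_norm, dist_eq_norm]
        have h := hlip x.1 y.1 ((memS _).mp x.2) ((memS _).mp y.2)
        calc ‖(f x : lp (fun _ : ℤ => ℝ) 2) - (f y : lp (fun _ : ℤ => ℝ) 2)‖
            = ‖Ψ a x.1 - Ψ a y.1‖ := rfl
          _ ≤ (1 / 2) * ‖x.1 - y.1‖ := h
          _ = ((1 / 2 : NNReal) : ℝ) * ‖x.1 - y.1‖ := by norm_num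
    obtain ⟨x, hx⟩ : ∃ x : S, f x = x := ⟨hcf.fixedPoint f, hcf.fixedPoint_isFixedPt⟩
    refine ⟨x.1, (memS _).mp x.2, ?_⟩
    have : (f x : lp (fun _ : ℤ => ℝ) 2) = x.1 := by rw [hx]
    exact this.symm
  -- choice of the function u
  have hexists' : ∀ a : ℝ, ∃ w : lp (fun _ : ℤ => ℝ) 2,
      0 < a → a < a₀ → (‖w‖ ≤ 2 * C₀ * a ∧ w = Ψ a w) := by
    intro a
    by_cases h : 0 < a ∧ a < a₀
    · obtain ⟨w, hw⟩ := hexists a h.1 h.2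
      exact ⟨w, fun _ _ => hw⟩
    · exact ⟨0, fun h1 h2 => absurd ⟨h1, h2⟩ h⟩
  choose u hu using hexists'
  have hiφ : ⟪φ, φ⟫ = 1 := by
    rw [real_inner_self_eq_norm_mul_norm, hφ]; norm_num
  refine ⟨C₀, hC₀, a₀, ha₀, u, ?_, ?_⟩
  · intro a ha ha'
    obtain ⟨h1, h2⟩ := hu a ha ha'
    refine ⟨h1, h2, ?_⟩
    have horth : ⟪u a, φ⟫ = 0 := by rw [h2]; exact hRorth _
    have hwφ : ⟪⟪B a (φ + u a), φ⟫ • (φ + u a) - B a (φ + u a), φ⟫ = 0 := by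
      rw [inner_sub_left, real_inner_smul_left, inner_add_left, horth, hiφ]
      ring
    have hHu : H (u a) - e • u a =
        (⟪B a (φ + u a), φ⟫ • (φ + u a) - B a (φ + u a)) := by
      have h3 := hR (⟪B a (φ + u a), φ⟫ • (φ + u a) - B a (φ + u a))
      rw [hwφ, zero_smul, sub_zero] at h3
      conv_lhs => rw [h2]
      exact h3
    rw [sub_eq_iff_eq_add] at hHu
    rw [ContinuousLinearMap.add_apply, map_add, heig, hHu]
    module
  · have hten : Filter.Tendsto (fun a => ⟪B a (φ + u a), φ⟫)
        (nhdsWithin 0 (Set.Ioi 0)) (nhds 0) := by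
      rw [tendsto_zero_iff_norm_tendsto_zero]
      apply squeeze_zero' (g := fun a => C * a * 2)
        (Filter.Eventually.of_forall fun _ => norm_nonneg _)
      · filter_upwards [Ioo_mem_nhdsGT_of_mem (Set.mem_Ico.mpr ⟨le_refl (0:ℝ), ha₀⟩)] with a ha
        obtain ⟨h1, h2⟩ := hu a ha.1 ha.2
        have hamin1 : a ≤ 1 / (2 * C₀) := le_of_lt (lt_of_lt_of_le ha.2 (min_le_left _ _))
        have hr1 : 2 * C₀ * a ≤ 1 := by
          rw [le_div_iff₀ (by linarith : (0:ℝ) < 2 * C₀)] at hamin1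
          nlinarith
        have hu1 : ‖u a‖ ≤ 1 := h1.trans hr1
        rw [Real.norm_eq_abs]
        exact hinner a ha.1 (u a) hu1
      · have h0 : Filter.Tendsto (fun a : ℝ => C * a * 2) (nhds 0) (nhds 0) := by
          have hc : Continuous (fun a : ℝ => C * a * 2) := by fun_prop
          simpa using hc.tendsto 0
        exact h0.mono_left nhdsWithin_le_nhds
    have := Filter.Tendsto.add (tendsto_const_nhds (x := e)
      (f := nhdsWithin (0:ℝ) (Set.Ioi 0))) hten
    simpa using this
end

section
/- Let H = -Δ + V on ℓ²(ℤ) with V(j) → 0 as |j| → ∞, and suppose e ∉ [0,4] is an eigenvalue of H with one-dimensional eigenspace spanned by the normalized eigenfunction φ. Then there exists a > 0 such that φ ∈ ℓ²_{e,a}, i.e. Σ_{j∈ℤ} e^{2a|j|}|φ(j)|² < ∞; in other words, φ decays exponentially. -/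
open Filter

lemma aux_zero (c u : ℤ → ℝ)
    (hrec : ∀ j : ℤ, u (j+1) + u (j-1) = c j * u j)
    (m : ℤ) (h0 : u m = 0) (h1 : u (m+1) = 0) : ∀ j, u j = 0 := by
  have fwd : ∀ k : ℕ, u (m + k) = 0 ∧ u (m + k + 1) = 0 := by
    intro k
    induction k with
    | zero => exact ⟨by simpa using h0, by simpa using h1⟩
    | succ k ih =>
      have h := hrec (m + k + 1)
      have e2 : (m + k + 1 - 1 : ℤ) = m + k := by ring
      rw [e2, ih.1, ih.2, mul_zero, add_zero] at h
      refine ⟨by rw [show (m + (k+1:ℕ) : ℤ) = m + k + 1 by push_cast; ring]; exact ih.2, ?_⟩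
      rw [show (m + (k+1:ℕ) + 1 : ℤ) = (m + k + 1) + 1 by push_cast; ring]
      exact h
  have bwd : ∀ k : ℕ, u (m - k) = 0 ∧ u (m - k + 1) = 0 := by
    intro k
    induction k with
    | zero => exact ⟨by simpa using h0, by simpa using h1⟩
    | succ k ih =>
      have h := hrec (m - k)
      rw [ih.1, mul_zero, ih.2] at h
      refine ⟨?_, ?_⟩
      · rw [show (m - (k+1:ℕ) : ℤ) = m - k - 1 by push_cast; ring]
        linarith
      · rw [show (m - (k+1:ℕ) + 1 : ℤ) = m - k by push_cast; ring]
        exact ih.1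
  intro j
  rcases le_or_gt m j with h | h
  · have hj : j = m + ((j - m).toNat : ℤ) := by
      rw [Int.toNat_of_nonneg (by omega)]; ring
    rw [hj]; exact (fwd _).1
  · have hj : j = m - ((m - j).toNat : ℤ) := by
      rw [Int.toNat_of_nonneg (by omega)]; ring
    rw [hj]; exact (bwd _).1

lemma aux_decay (c u : ℤ → ℝ) (δ : ℝ) (hδ : 0 < δ) (N : ℤ)
    (hrec : ∀ j : ℤ, u (j+1) + u (j-1) = c j * u j)
    (hc : ∀ j, N ≤ j → 2 + δ ≤ |c j|)
    (hsum : Summable (fun j : ℤ => (u j)^2)) (hone : ∑' j : ℤ, (u j)^2 = 1) :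
    ∀ k : ℕ, (1+δ)^k * |u (N + k)| ≤ |u N| := by
  have htend : Tendsto (fun j : ℤ => (u j)^2) atTop (nhds 0) :=
    hsum.tendsto_cofinite_zero.mono_left (by rw [Int.cofinite_eq]; exact le_sup_right)
  have hstep : ∀ j, N ≤ j → (2+δ) * |u j| ≤ |u (j+1)| + |u (j-1)| := by
    intro j hj
    calc (2+δ) * |u j| ≤ |c j| * |u j| :=
          mul_le_mul_of_nonneg_right (hc j hj) (abs_nonneg _)
      _ = |c j * u j| := (abs_mul _ _).symm
      _ = |u (j+1) + u (j-1)| := by rw [hrec]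
      _ ≤ _ := abs_add_le _ _
  have hdec : ∀ j, N ≤ j → |u (j+1)| < |u j| := by
    intro j hj
    by_contra hcon
    push_neg at hcon
    have growth : ∀ k : ℕ, |u (j + k)| ≤ |u (j + 1 + k)| ∧
        (1+δ)^k * |u (j+1)| ≤ |u (j+1+k)| := by
      intro k
      induction k with
      | zero => constructor <;> simpa using hcon
      | succ k ih =>
        have hjj : N ≤ j + 1 + k := by
          have : (0:ℤ) ≤ (k:ℤ) := Int.natCast_nonneg k
          omega
        have hs := hstep (j + 1 + k) hjj
        have e1 : (j + 1 + k - 1 : ℤ) = j + k := by ring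
        rw [e1] at hs
        have key : (1+δ) * |u (j+1+k)| ≤ |u (j+1+k+1)| := by
          have := ih.1
          linarith
        have hnn : (0:ℝ) ≤ |u (j+1+k)| := abs_nonneg _
        constructor
        · rw [show (j + (k+1:ℕ) : ℤ) = j + 1 + k by push_cast; ring,
            show (j + 1 + (k+1:ℕ) : ℤ) = j + 1 + k + 1 by push_cast; ring]
          nlinarith
        · rw [show (j + 1 + (k+1:ℕ) : ℤ) = j + 1 + k + 1 by push_cast; ring]
          have h2 := ih.2
          have hp : (0:ℝ) ≤ (1+δ)^k := by positivity
          calc (1+δ)^(k+1) * |u (j+1)| = (1+δ) * ((1+δ)^k * |u (j+1)|) := by ring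
            _ ≤ (1+δ) * |u (j+1+k)| :=
                mul_le_mul_of_nonneg_left h2 (by linarith)
            _ ≤ _ := key
    have hz1 : u (j+1) = 0 := by
      by_contra hne
      have hpos : 0 < (u (j+1))^2 := by positivity
      have hto : Tendsto (fun k : ℕ => (u (j+1+k))^2) atTop (nhds 0) := by
        apply htend.comp
        exact tendsto_atTop_add_const_left _ _ tendsto_natCast_atTop_atTop
      have hev : ∀ᶠ k : ℕ in atTop, (u (j+1+k))^2 < (u (j+1))^2 :=
        hto.eventually (gt_mem_nhds hpos)
      rcases hev.exists with ⟨k, hk⟩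
      have hg := (growth k).2
      have h1 : (1:ℝ) ≤ (1+δ)^k := one_le_pow₀ (by linarith)
      have hle : |u (j+1)| ≤ |u (j+1+k)| := by nlinarith [abs_nonneg (u (j+1))]
      have : (u (j+1))^2 ≤ (u (j+1+k))^2 := by
        rw [← sq_abs (u (j+1)), ← sq_abs (u (j+1+k))]
        exact pow_le_pow_left₀ (abs_nonneg _) hle 2
      linarith
    have hz0 : u j = 0 := by
      rw [hz1] at hcon
      simp only [abs_zero] at hcon
      exact abs_eq_zero.mp (le_antisymm hcon (abs_nonneg _))
    have hall := aux_zero c u hrec j hz0 hz1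
    have hzero : ∑' j : ℤ, (u j)^2 = 0 := by simp [hall]
    rw [hone] at hzero
    norm_num at hzero
  have hback : ∀ j, N ≤ j → (1+δ) * |u j| ≤ |u (j-1)| := by
    intro j hj
    have h1 := hstep j hj
    have h2 := (hdec j hj).le
    linarith
  intro k
  induction k with
  | zero => simp
  | succ k ih =>
    have hj : N ≤ N + k + 1 := by
      have : (0:ℤ) ≤ (k:ℤ) := Int.natCast_nonneg k
      omega
    have hb := hback (N + k + 1) hj
    have e1 : (N + k + 1 - 1 : ℤ) = N + k := by ring
    rw [e1] at hb
    have hp : (0:ℝ) ≤ (1+δ)^k := by positivity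
    rw [show (N + (k+1:ℕ) : ℤ) = N + k + 1 by push_cast; ring]
    calc (1+δ)^(k+1) * |u (N+k+1)| = (1+δ)^k * ((1+δ) * |u (N+k+1)|) := by ring
      _ ≤ (1+δ)^k * |u (N+k)| := mul_le_mul_of_nonneg_left hb hp
      _ ≤ |u N| := ih

lemma aux_sum (u : ℤ → ℝ) (δ : ℝ) (hδ : 0 < δ) (Np : ℕ)
    (hbd : ∀ k : ℕ, (1+δ)^k * |u ((Np:ℤ) + k)| ≤ |u (Np:ℤ)|) :
    Summable (fun n : ℕ => (1+δ)^n * u (n:ℤ) ^ 2) := by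
  rw [← summable_nat_add_iff Np]
  have hr0 : (0:ℝ) ≤ (1+δ)⁻¹ := by positivity
  have hr1 : (1+δ)⁻¹ < 1 := by
    rw [inv_lt_one_iff₀]; right; linarith
  have hgeom : Summable (fun n : ℕ => ((1+δ)^Np * u (Np:ℤ)^2) * ((1+δ)⁻¹)^n) :=
    (summable_geometric_of_lt_one hr0 hr1).mul_left _
  apply Summable.of_nonneg_of_le (fun n => by positivity) _ hgeom
  intro n
  have hb := hbd n
  have hp : (0:ℝ) < (1+δ)^n := by positivity
  have h2 : ((1+δ)^n)^2 * u ((Np:ℤ) + n)^2 ≤ u (Np:ℤ)^2 := by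
    have hsq := mul_self_le_mul_self
      (mul_nonneg hp.le (abs_nonneg (u ((Np:ℤ)+n)))) hb
    nlinarith [sq_abs (u ((Np:ℤ) + n)), sq_abs (u (Np:ℤ))]
  have h3 : (1+δ)^n * u ((Np:ℤ)+n)^2 ≤ ((1+δ)⁻¹)^n * u (Np:ℤ)^2 := by
    rw [inv_pow, le_inv_mul_iff₀ hp]
    nlinarith
  calc (1+δ)^(n+Np) * u ((n+Np : ℕ):ℤ)^2
      = (1+δ)^Np * ((1+δ)^n * u ((Np:ℤ)+n)^2) := by
        rw [show (((n+Np:ℕ)):ℤ) = (Np:ℤ) + n by push_cast; ring]; ring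
    _ ≤ (1+δ)^Np * (((1+δ)⁻¹)^n * u (Np:ℤ)^2) :=
        mul_le_mul_of_nonneg_left h3 (by positivity)
    _ = ((1+δ)^Np * u (Np:ℤ)^2) * ((1+δ)⁻¹)^n := by ring

/-- Exponential decay of eigenfunctions: if `H = -Δ + V` on `ℓ²(ℤ)` with `V(j) → 0`,
`e ∉ [0,4]` is an eigenvalue of `H` with one-dimensional eigenspace spanned by the
normalized eigenfunction `φ`, then `φ ∈ ℓ²_{e,a}` for some `a > 0`,
i.e. `Σ_j e^{2a|j|} φ(j)² < ∞`. -/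
theorem stmt4 (V : ℤ → ℝ) (hV : Filter.Tendsto V Filter.cofinite (nhds 0))
    (e : ℝ) (he : e ∉ Set.Icc (0 : ℝ) 4)
    (φ : ℤ → ℝ) (hφ2 : Summable (fun j : ℤ => (φ j) ^ 2)) (hφn : ∑' j : ℤ, (φ j) ^ 2 = 1)
    (heig : ∀ j : ℤ, -(φ (j + 1) - 2 * φ j + φ (j - 1)) + V j * φ j = e * φ j)
    (hsimple : ∀ ψ : ℤ → ℝ, Summable (fun j : ℤ => (ψ j) ^ 2) →
      (∀ j : ℤ, -(ψ (j + 1) - 2 * ψ j + ψ (j - 1)) + V j * ψ j = e * ψ j) →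
      ∃ c : ℝ, ∀ j, ψ j = c * φ j) :
    ∃ a > 0, Summable (fun j : ℤ => Real.exp (2 * a * |(j : ℝ)|) * (φ j) ^ 2) := by
  clear hsimple
  have habs : 2 < |2 - e| := by
    simp only [Set.mem_Icc, not_and_or, not_le] at he
    rcases he with h | h
    · rw [abs_of_pos (by linarith)]; linarith
    · rw [abs_of_neg (by linarith)]; linarith
  set δ : ℝ := (|2 - e| - 2)/2 with hδdef
  have hδ : 0 < δ := by rw [hδdef]; linarith
  have hcb : ∀ j : ℤ, |V j| < δ → 2 + δ ≤ |2 + V j - e| := by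
    intro j hj
    have h1 := abs_sub_abs_le_abs_sub (2 - e) (2 + V j - e)
    have h2 : (2 - e) - (2 + V j - e) = -V j := by ring
    rw [h2, abs_neg] at h1
    have h3 : |2-e| = 2 + 2*δ := by rw [hδdef]; ring
    linarith
  have hrec : ∀ j : ℤ, φ (j+1) + φ (j-1) = (2 + V j - e) * φ j := by
    intro j; linear_combination - heig j
  rw [Int.cofinite_eq] at hV
  have hVtop : Filter.Tendsto V atTop (nhds 0) := hV.mono_left le_sup_right
  have hVbot : Filter.Tendsto V atBot (nhds 0) := hV.mono_left le_sup_left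
  have hev1 : ∀ᶠ j : ℤ in atTop, |V j| < δ := by
    filter_upwards [hVtop.eventually (Metric.ball_mem_nhds (0:ℝ) hδ)] with j hj
    simpa [Real.dist_eq] using hj
  obtain ⟨N₁, hN₁⟩ := eventually_atTop.mp hev1
  have hev2 : ∀ᶠ j : ℤ in atBot, |V j| < δ := by
    filter_upwards [hVbot.eventually (Metric.ball_mem_nhds (0:ℝ) hδ)] with j hj
    simpa [Real.dist_eq] using hj
  obtain ⟨N₂, hN₂⟩ := eventually_atBot.mp hev2
  set Np : ℕ := (max N₁ 0).toNat with hNpdef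
  set Nm : ℕ := (max (-N₂) 0).toNat with hNmdef
  have hNp' : (Np:ℤ) = max N₁ 0 := Int.toNat_of_nonneg (le_max_right N₁ 0)
  have hNm' : (Nm:ℤ) = max (-N₂) 0 := Int.toNat_of_nonneg (le_max_right (-N₂) 0)
  have hbdR := aux_decay (fun j => 2 + V j - e) φ δ hδ (Np:ℤ) hrec
    (fun j hj => hcb j (hN₁ j (by rw [hNp'] at hj; exact le_trans (le_max_left _ _) hj)))
    hφ2 hφn
  set ψ : ℤ → ℝ := fun j => φ (-j) with hψdef
  have hrecψ : ∀ j : ℤ, ψ (j+1) + ψ (j-1) = (2 + V (-j) - e) * ψ j := by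
    intro j
    have h := hrec (-j)
    simp only [hψdef]
    rw [show (-(j+1) : ℤ) = (-j) - 1 by ring, show (-(j-1) : ℤ) = (-j) + 1 by ring]
    linarith
  have hψ2 : Summable (fun j : ℤ => ψ j ^ 2) := by
    have h : (fun j : ℤ => ψ j ^2) = (fun j : ℤ => φ j ^2) ∘ (Equiv.neg ℤ) := rfl
    rw [h, Equiv.summable_iff]
    exact hφ2
  have hψn : ∑' j : ℤ, ψ j ^2 = 1 := by
    rw [← hφn]
    exact Equiv.tsum_eq (Equiv.neg ℤ) (fun j => φ j ^2)
  have hbdL := aux_decay (fun j => 2 + V (-j) - e) ψ δ hδ (Nm:ℤ) hrecψ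
    (fun j hj => hcb (-j) (hN₂ (-j) (by rw [hNm'] at hj; omega)))
    hψ2 hψn
  set a : ℝ := Real.log (1+δ) / 2 with hadef
  have ha : 0 < a := by
    have := Real.log_pos (by linarith : (1:ℝ) < 1 + δ)
    rw [hadef]; linarith
  refine ⟨a, ha, ?_⟩
  have hwt : ∀ n : ℕ, Real.exp (2*a*(n:ℝ)) = (1+δ)^n := by
    intro n
    rw [show 2*a*(n:ℝ) = (n:ℝ) * Real.log (1+δ) by rw [hadef]; ring,
      Real.exp_nat_mul, Real.exp_log (by linarith)]
  rw [summable_int_iff_summable_nat_and_neg]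
  constructor
  · apply Summable.congr (aux_sum φ δ hδ Np hbdR)
    intro n
    have h1 : |(((n:ℤ)):ℝ)| = (n:ℝ) := by
      push_cast
      exact abs_of_nonneg (Nat.cast_nonneg n)
    rw [h1, hwt n]
  · apply Summable.congr (aux_sum ψ δ hδ Nm hbdL)
    intro n
    push_cast
    rw [abs_neg, Nat.abs_cast, hwt n]
end

section
/- Define, for sequences v₁ = {v_{1,n}}_{n≥0}, v₂ = {v_{2,n}}_{n≥0} in X_{a,r} and a real parameter s = |z|² with 0 ≤ s < r², the bilinear convolution-type operation M(s, v₁, v₂) = Σ_{m≥0} s^m m_m(v₁,v₂), where m_0(v₁,v₂)_n = v_{1,n}v_{2,0} + Σ_{0≤n₁≤n} v_{1,n₁}v_{2,n-n₁} and for m ≥ 1, m_m(v₁,v₂)_n = v_{1,n+m}v_{2,m} + v_{1,m}v_{2,n+m}. Then each m_m is a bounded bilinear map on X_{a,r} with ‖m_m(v₁,v₂)‖_{a,r} ≤ 2 r^{-2m} ‖v₁‖_{a,r}‖v₂‖_{a,r}, and consequently for |s| ≤ δ² with δ < r, the series defining M(s,·,·) converges in the space of bounded bilinear operators with ‖M(s,·,·)‖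 ≤ 2/(1 - δ²/r²). -/
/-- The bilinear convolution-type coefficients `m_m(v₁,v₂)` of the product expansion. -/
noncomputable def mmCoef {E : Type*} [NonUnitalNormedRing E]
    (v₁ v₂ : ℕ → E) (m n : ℕ) : E :=
  if m = 0 then v₁ n * v₂ 0 + ∑ k ∈ Finset.range (n + 1), v₁ k * v₂ (n - k)
  else v₁ (n + m) * v₂ m + v₁ m * v₂ (n + m)

/-- Each `m_m` is bounded on `X_{a,r}` with `‖m_m(v₁,v₂)‖_{a,r} ≤ 2r^{-2m}‖v₁‖‖v₂‖`, and
for `0 ≤ s ≤ δ² < r²` the series `M(s,v₁,v₂) = Σ_m s^m m_m(v₁,v₂)` converges with total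
bound `2/(1 - δ²/r²)·‖v₁‖‖v₂‖`. -/
theorem stmt8 {E : Type*} [NonUnitalNormedRing E]
    (r δ : ℝ) (hr : 0 < r) (hδ : 0 < δ) (hδr : δ < r)
    (v₁ v₂ : ℕ → E)
    (h₁ : Summable (fun n => r ^ n * ‖v₁ n‖)) (h₂ : Summable (fun n => r ^ n * ‖v₂ n‖)) :
    (∀ m : ℕ, Summable (fun n => r ^ n * ‖mmCoef v₁ v₂ m n‖) ∧
      ∑' n, r ^ n * ‖mmCoef v₁ v₂ m n‖ ≤
        2 / r ^ (2 * m) * ((∑' n, r ^ n * ‖v₁ n‖) * ∑' n, r ^ n * ‖v₂ n‖)) ∧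
    ∀ s : ℝ, 0 ≤ s → s ≤ δ ^ 2 →
      Summable (fun m => s ^ m * ∑' n, r ^ n * ‖mmCoef v₁ v₂ m n‖) ∧
      ∑' m, s ^ m * ∑' n, r ^ n * ‖mmCoef v₁ v₂ m n‖ ≤
        2 / (1 - δ ^ 2 / r ^ 2) * ((∑' n, r ^ n * ‖v₁ n‖) * ∑' n, r ^ n * ‖v₂ n‖) := by
  set f₁ : ℕ → ℝ := fun n => r ^ n * ‖v₁ n‖ with hf₁
  set f₂ : ℕ → ℝ := fun n => r ^ n * ‖v₂ n‖ with hf₂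
  have hf₁0 : ∀ n, 0 ≤ f₁ n := fun n =>
    mul_nonneg (pow_nonneg hr.le n) (norm_nonneg _)
  have hf₂0 : ∀ n, 0 ≤ f₂ n := fun n =>
    mul_nonneg (pow_nonneg hr.le n) (norm_nonneg _)
  set A := ∑' n, f₁ n with hA
  set B := ∑' n, f₂ n with hB
  have hA0 : 0 ≤ A := tsum_nonneg hf₁0
  have hB0 : 0 ≤ B := tsum_nonneg hf₂0
  have hf₁le : ∀ n, f₁ n ≤ A := fun n => Summable.le_tsum h₁ n (fun k _ => hf₁0 k)
  have hf₂le : ∀ n, f₂ n ≤ B := fun n => Summable.le_tsum h₂ n (fun k _ => hf₂0 k)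
  have hn₁ : Summable (fun n => ‖f₁ n‖) := by
    simpa [Real.norm_of_nonneg (hf₁0 _)] using h₁
  have hn₂ : Summable (fun n => ‖f₂ n‖) := by
    simpa [Real.norm_of_nonneg (hf₂0 _)] using h₂
  have hmul : Summable fun x : ℕ × ℕ => f₁ x.1 * f₂ x.2 :=
    summable_mul_of_summable_norm hn₁ hn₂
  -- the Cauchy product
  have hC : Summable fun n => ∑ k ∈ Finset.range (n + 1), f₁ k * f₂ (n - k) :=
    summable_sum_mul_range_of_summable_mul hmul
  have hCsum : A * B = ∑' n, ∑ k ∈ Finset.range (n + 1), f₁ k * f₂ (n - k) :=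
    Summable.tsum_mul_tsum_eq_tsum_sum_range h₁ h₂ hmul
  -- the main bound for each m
  have key : ∀ m : ℕ, Summable (fun n => r ^ n * ‖mmCoef v₁ v₂ m n‖) ∧
      ∑' n, r ^ n * ‖mmCoef v₁ v₂ m n‖ ≤ 2 / r ^ (2 * m) * (A * B) := by
    intro m
    rcases Nat.eq_zero_or_pos m with hm | hm
    · subst hm
      have hle : ∀ n, r ^ n * ‖mmCoef v₁ v₂ 0 n‖ ≤
          f₁ n * f₂ 0 + ∑ k ∈ Finset.range (n + 1), f₁ k * f₂ (n - k) := by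
        intro n
        have h1 : r ^ n * ‖v₁ n * v₂ 0‖ ≤ f₁ n * f₂ 0 := by
          calc r ^ n * ‖v₁ n * v₂ 0‖ ≤ r ^ n * (‖v₁ n‖ * ‖v₂ 0‖) := by
                exact mul_le_mul_of_nonneg_left (norm_mul_le _ _) (pow_nonneg hr.le n)
            _ = f₁ n * f₂ 0 := by simp [hf₁, hf₂]; ring
        have h2 : r ^ n * ‖∑ k ∈ Finset.range (n + 1), v₁ k * v₂ (n - k)‖ ≤
            ∑ k ∈ Finset.range (n + 1), f₁ k * f₂ (n - k) := by
          calc r ^ n * ‖∑ k ∈ Finset.range (n + 1), v₁ k * v₂ (n - k)‖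
              ≤ r ^ n * ∑ k ∈ Finset.range (n + 1), ‖v₁ k * v₂ (n - k)‖ :=
                mul_le_mul_of_nonneg_left (norm_sum_le _ _) (pow_nonneg hr.le n)
            _ = ∑ k ∈ Finset.range (n + 1), r ^ n * ‖v₁ k * v₂ (n - k)‖ := by
                rw [Finset.mul_sum]
            _ ≤ ∑ k ∈ Finset.range (n + 1), f₁ k * f₂ (n - k) := by
                apply Finset.sum_le_sum
                intro k hk
                have hk' : k ≤ n := Nat.lt_succ_iff.mp (Finset.mem_range.mp hk)
                have hrn : r ^ n = r ^ k * r ^ (n - k) := by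
                  rw [← pow_add]; congr 1; omega
                calc r ^ n * ‖v₁ k * v₂ (n - k)‖
                    ≤ r ^ n * (‖v₁ k‖ * ‖v₂ (n - k)‖) :=
                      mul_le_mul_of_nonneg_left (norm_mul_le _ _) (pow_nonneg hr.le n)
                  _ = f₁ k * f₂ (n - k) := by rw [hrn]; simp [hf₁, hf₂]; ring
        calc r ^ n * ‖mmCoef v₁ v₂ 0 n‖
            ≤ r ^ n * (‖v₁ n * v₂ 0‖ + ‖∑ k ∈ Finset.range (n + 1), v₁ k * v₂ (n - k)‖) := by
              apply mul_le_mul_of_nonneg_left _ (pow_nonneg hr.le n)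
              simp only [mmCoef, if_pos rfl]
              exact norm_add_le _ _
          _ = r ^ n * ‖v₁ n * v₂ 0‖ + r ^ n * ‖∑ k ∈ Finset.range (n + 1), v₁ k * v₂ (n - k)‖ := by
              ring
          _ ≤ f₁ n * f₂ 0 + ∑ k ∈ Finset.range (n + 1), f₁ k * f₂ (n - k) := add_le_add h1 h2
      have hgsum : Summable (fun n => f₁ n * f₂ 0 + ∑ k ∈ Finset.range (n + 1), f₁ k * f₂ (n - k)) :=
        (h₁.mul_right _).add hC
      have hS : Summable (fun n => r ^ n * ‖mmCoef v₁ v₂ 0 n‖) :=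
        Summable.of_nonneg_of_le (fun n => mul_nonneg (pow_nonneg hr.le n) (norm_nonneg _)) hle hgsum
      refine ⟨hS, ?_⟩
      have := Summable.tsum_le_tsum hle hS hgsum
      rw [Summable.tsum_add (h₁.mul_right _) hC, tsum_mul_right, ← hCsum] at this
      calc ∑' n, r ^ n * ‖mmCoef v₁ v₂ 0 n‖ ≤ A * f₂ 0 + A * B := this
        _ ≤ A * B + A * B := by
            have := mul_le_mul_of_nonneg_left (hf₂le 0) hA0
            linarith
        _ = 2 / r ^ (2 * 0) * (A * B) := by rw [Nat.mul_zero, pow_zero]; ring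
    · have hm0 : m ≠ 0 := hm.ne'
      have hsh₁ : Summable (fun n => f₁ (n + m)) := (summable_nat_add_iff m).mpr h₁
      have hsh₂ : Summable (fun n => f₂ (n + m)) := (summable_nat_add_iff m).mpr h₂
      have hle : ∀ n, r ^ n * ‖mmCoef v₁ v₂ m n‖ ≤
          (r ^ (2 * m))⁻¹ * (f₁ (n + m) * f₂ m + f₁ m * f₂ (n + m)) := by
        intro n
        have hrn : r ^ (n + m) * r ^ m = r ^ (2 * m) * r ^ n := by
          rw [← pow_add, ← pow_add]; congr 1; omega
        have e1 : r ^ n * (‖v₁ (n + m)‖ * ‖v₂ m‖) =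
            (r ^ (2 * m))⁻¹ * (f₁ (n + m) * f₂ m) := by
          have hrne : r ≠ 0 := hr.ne'
          simp only [hf₁, hf₂, two_mul, pow_add]
          field_simp
        have e2 : r ^ n * (‖v₁ m‖ * ‖v₂ (n + m)‖) =
            (r ^ (2 * m))⁻¹ * (f₁ m * f₂ (n + m)) := by
          have hrne : r ≠ 0 := hr.ne'
          simp only [hf₁, hf₂, two_mul, pow_add]
          field_simp
        calc r ^ n * ‖mmCoef v₁ v₂ m n‖
            ≤ r ^ n * (‖v₁ (n + m) * v₂ m‖ + ‖v₁ m * v₂ (n + m)‖) := by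
              apply mul_le_mul_of_nonneg_left _ (pow_nonneg hr.le n)
              simp only [mmCoef, if_neg hm0]
              exact norm_add_le _ _
          _ ≤ r ^ n * (‖v₁ (n + m)‖ * ‖v₂ m‖ + ‖v₁ m‖ * ‖v₂ (n + m)‖) := by
              apply mul_le_mul_of_nonneg_left _ (pow_nonneg hr.le n)
              exact add_le_add (norm_mul_le _ _) (norm_mul_le _ _)
          _ = (r ^ (2 * m))⁻¹ * (f₁ (n + m) * f₂ m + f₁ m * f₂ (n + m)) := by
              rw [mul_add, e1, e2, mul_add]
      have hgsum : Summable (fun n =>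
          (r ^ (2 * m))⁻¹ * (f₁ (n + m) * f₂ m + f₁ m * f₂ (n + m))) :=
        (((hsh₁.mul_right _).add (hsh₂.mul_left _)).mul_left _)
      have hS : Summable (fun n => r ^ n * ‖mmCoef v₁ v₂ m n‖) :=
        Summable.of_nonneg_of_le (fun n => mul_nonneg (pow_nonneg hr.le n) (norm_nonneg _)) hle hgsum
      refine ⟨hS, ?_⟩
      have hrm : (0:ℝ) < r ^ (2 * m) := pow_pos hr _
      have ht := Summable.tsum_le_tsum hle hS hgsum
      rw [tsum_mul_left, Summable.tsum_add (hsh₁.mul_right _) (hsh₂.mul_left _),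
        tsum_mul_right, tsum_mul_left] at ht
      have h1' : (∑' n, f₁ (n + m)) ≤ A := by
        have := h₁.sum_add_tsum_nat_add m
        have hfin : 0 ≤ ∑ i ∈ Finset.range m, f₁ i :=
          Finset.sum_nonneg fun i _ => hf₁0 i
        rw [hA]; linarith [this]
      have h2' : (∑' n, f₂ (n + m)) ≤ B := by
        have := h₂.sum_add_tsum_nat_add m
        have hfin : 0 ≤ ∑ i ∈ Finset.range m, f₂ i :=
          Finset.sum_nonneg fun i _ => hf₂0 i
        rw [hB]; linarith [this]
      have htsum₁0 : 0 ≤ ∑' n, f₁ (n + m) := tsum_nonneg fun n => hf₁0 _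
      have htsum₂0 : 0 ≤ ∑' n, f₂ (n + m) := tsum_nonneg fun n => hf₂0 _
      have hbound : (∑' n, f₁ (n + m)) * f₂ m + f₁ m * ∑' n, f₂ (n + m) ≤ 2 * (A * B) := by
        have b1 : (∑' n, f₁ (n + m)) * f₂ m ≤ A * B :=
          mul_le_mul h1' (hf₂le m) (hf₂0 m) hA0
        have b2 : f₁ m * (∑' n, f₂ (n + m)) ≤ A * B :=
          mul_le_mul (hf₁le m) h2' htsum₂0 hA0
        linarith
      calc ∑' n, r ^ n * ‖mmCoef v₁ v₂ m n‖
          ≤ (r ^ (2 * m))⁻¹ * ((∑' n, f₁ (n + m)) * f₂ m + f₁ m * ∑' n, f₂ (n + m)) := ht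
        _ ≤ (r ^ (2 * m))⁻¹ * (2 * (A * B)) :=
            mul_le_mul_of_nonneg_left hbound (inv_nonneg.mpr hrm.le)
        _ = 2 / r ^ (2 * m) * (A * B) := by field_simp
  refine ⟨key, ?_⟩
  intro s hs0 hs
  have hr2 : (0:ℝ) < r ^ 2 := pow_pos hr 2
  set q : ℝ := s / r ^ 2 with hq
  have hq0 : 0 ≤ q := div_nonneg hs0 hr2.le
  have hqδ : q ≤ δ ^ 2 / r ^ 2 := (div_le_div_iff_of_pos_right hr2).mpr hs
  have hδ2 : δ ^ 2 / r ^ 2 < 1 := by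
    rw [div_lt_one hr2]
    exact pow_lt_pow_left₀ hδr hδ.le two_ne_zero
  have hq1 : q < 1 := hqδ.trans_lt hδ2
  have hTnonneg : ∀ m, 0 ≤ s ^ m * ∑' n, r ^ n * ‖mmCoef v₁ v₂ m n‖ := fun m =>
    mul_nonneg (pow_nonneg hs0 m)
      (tsum_nonneg fun n => mul_nonneg (pow_nonneg hr.le n) (norm_nonneg _))
  have hTle : ∀ m, s ^ m * ∑' n, r ^ n * ‖mmCoef v₁ v₂ m n‖ ≤ 2 * (A * B) * q ^ m := by
    intro m
    have h1 := (key m).2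
    have hsm : (0:ℝ) ≤ s ^ m := pow_nonneg hs0 m
    calc s ^ m * ∑' n, r ^ n * ‖mmCoef v₁ v₂ m n‖
        ≤ s ^ m * (2 / r ^ (2 * m) * (A * B)) := mul_le_mul_of_nonneg_left h1 hsm
      _ = 2 * (A * B) * q ^ m := by
          rw [hq, div_pow, pow_mul]
          have : (0:ℝ) < (r ^ 2) ^ m := pow_pos hr2 m
          field_simp
  have hgsum : Summable (fun m => 2 * (A * B) * q ^ m) :=
    (summable_geometric_of_lt_one hq0 hq1).mul_left _
  have hS : Summable (fun m => s ^ m * ∑' n, r ^ n * ‖mmCoef v₁ v₂ m n‖) :=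
    Summable.of_nonneg_of_le hTnonneg hTle hgsum
  refine ⟨hS, ?_⟩
  have ht := Summable.tsum_le_tsum hTle hS hgsum
  rw [tsum_mul_left, tsum_geometric_of_lt_one hq0 hq1] at ht
  have hden : (0:ℝ) < 1 - δ ^ 2 / r ^ 2 := by linarith
  have hden' : (0:ℝ) < 1 - q := by linarith
  have hmono : (1 - q)⁻¹ ≤ (1 - δ ^ 2 / r ^ 2)⁻¹ := by
    apply inv_anti₀ hden
    linarith
  calc ∑' m, s ^ m * ∑' n, r ^ n * ‖mmCoef v₁ v₂ m n‖
      ≤ 2 * (A * B) * (1 - q)⁻¹ := ht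
    _ ≤ 2 * (A * B) * (1 - δ ^ 2 / r ^ 2)⁻¹ :=
        mul_le_mul_of_nonneg_left hmono (by positivity)
    _ = 2 / (1 - δ ^ 2 / r ^ 2) * (A * B) := by field_simp
end
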